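/- Let p, q be probability distributions on a finite set satisfying e^{-ε} ≤ p(z)/q(z) ≤ e^{ε} for all z, where ε ≥ 0. Then D_KL(p‖q) := Σ_z p(z) log(p(z)/q(z)) ≤ ε(e^ε − 1)/(e^ε + 1). -/

import Mathlib

open BigOperators

/-- **KL divergence bound under pointwise bounded likelihood ratio.**
If `e^{-ε} ≤ p z / q z ≤ e^{ε}` for all `z`, then
`D_KL(p‖q) ≤ ε (e^ε − 1)/(e^ε + 1)`. -/
theorem kl_le_of_bounded_ratio
    {Z : Type*} [Fintype Z] (p q : Z → ℝ) (ε : ℝ) (hε : 0 ≤ ε)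
    (hp : ∀ z, 0 ≤ p z) (hq : ∀ z, 0 < q z)
    (hpsum : ∑ z, p z = 1) (hqsum : ∑ z, q z = 1)
    (hlo : ∀ z, Real.exp (-ε) ≤ p z / q z)
    (hhi : ∀ z, p z / q z ≤ Real.exp ε) :
    ∑ z, p z * Real.log (p z / q z)
      ≤ ε * (Real.exp ε - 1) / (Real.exp ε + 1) := by
  rcases eq_or_lt_of_le hε with h0 | hεpos
  · -- ε = 0 : then p = q pointwise, KL = 0
    have hz : ∀ z, p z * Real.log (p z / q z) = 0 := by
      intro z
      have h1 := hlo z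
      have h2 := hhi z
      rw [← h0] at h1 h2
      simp only [neg_zero, Real.exp_zero] at h1 h2
      have : p z / q z = 1 := le_antisymm h2 h1
      rw [this, Real.log_one, mul_zero]
    rw [← h0]
    simp [hz]
  · set a := Real.exp (-ε) with ha_def
    set b := Real.exp ε with hb_def
    have hab : a * b = 1 := by rw [ha_def, hb_def, ← Real.exp_add]; simp
    have hb1 : 1 < b := by
      have := Real.add_one_le_exp ε
      rw [hb_def]; linarith
    have ha0 : 0 < a := Real.exp_pos _
    have ha1 : a < 1 := by nlinarith
    have hba : 0 < b - a := by linarith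
    have hloga : Real.log a = -ε := Real.log_exp _
    have hlogb : Real.log b = ε := Real.log_exp _
    set A := a * Real.log a with hA
    set B := b * Real.log b with hB
    have key : ∀ z, p z * Real.log (p z / q z) ≤
        q z * ((b * A - a * B) / (b - a)) + p z * ((B - A) / (b - a)) := by
      intro z
      set r := p z / q z with hr
      have hqz := hq z
      have hpz : p z = q z * r := by rw [hr, mul_div_assoc', mul_div_cancel_left₀ _ hqz.ne']
      have hra : a ≤ r := hlo z
      have hrb : r ≤ b := hhi z
      clear_value r
      have hconv := Real.convexOn_mul_log.2 (Set.mem_Ici.mpr ha0.le)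
        (Set.mem_Ici.mpr (by linarith : (0:ℝ) ≤ b))
        (show (0:ℝ) ≤ (b - r) / (b - a) from div_nonneg (by linarith) hba.le)
        (show (0:ℝ) ≤ (r - a) / (b - a) from div_nonneg (by linarith) hba.le)
        (by field_simp; ring)
      have harg : ((b - r) / (b - a)) * a + ((r - a) / (b - a)) * b = r := by
        rw [div_mul_eq_mul_div, div_mul_eq_mul_div, ← add_div,
          div_eq_iff (ne_of_gt hba)]
        ring
      simp only [smul_eq_mul] at hconv
      rw [harg] at hconv
      have h1 : p z * Real.log r = q z * (r * Real.log r) := by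
        rw [hpz]; ring
      rw [h1]
      have h2 : q z * (r * Real.log r) ≤
          q z * ((b - r) / (b - a) * A + (r - a) / (b - a) * B) := by
        apply mul_le_mul_of_nonneg_left _ hqz.le
        exact hconv
      calc q z * (r * Real.log r)
          ≤ q z * ((b - r) / (b - a) * A + (r - a) / (b - a) * B) := h2
        _ = q z * ((b * A - a * B) / (b - a)) + p z * ((B - A) / (b - a)) := by
            rw [hpz]; field_simp; ring
    calc ∑ z, p z * Real.log (p z / q z)
        ≤ ∑ z, (q z * ((b * A - a * B) / (b - a)) + p z * ((B - A) / (b - a))) :=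
          Finset.sum_le_sum fun z _ => key z
      _ = (b * A - a * B) / (b - a) + (B - A) / (b - a) := by
          rw [Finset.sum_add_distrib, ← Finset.sum_mul, ← Finset.sum_mul, hpsum, hqsum,
            one_mul, one_mul]
      _ = ε * (b - 1) / (b + 1) := by
          rw [hA, hB, hloga, hlogb]
          rw [← add_div, div_eq_div_iff (ne_of_gt hba) (by positivity : (b + 1 : ℝ) ≠ 0)]
          linear_combination (-2 * ε * b) * hab
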